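/- For any function f : X → ℝ∪{+∞,−∞} on a real locally convex space X and any (x, x*) ∈ X × X*, the Fitzpatrick function of the subdifferential ∂f satisfies φ_{∂f}(x, x*) ≤ f**(x) + f*(x*). -/

import Mathlib

open scoped Topology

section Defs

variable {X : Type*} [AddCommGroup X] [Module ℝ X] [TopologicalSpace X]

/-- `p ∈ ∂f(x)`: `f x` is finite and `f y ≥ f x + ⟨y - x, p⟩` for all `y`. -/
def IsSubgrad (f : X → EReal) (x : X) (p : X →L[ℝ] ℝ) : Prop :=
  f x ≠ ⊤ ∧ f x ≠ ⊥ ∧ ∀ y, f x + (p (y - x) : EReal) ≤ f y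

/-- Graph of the convex subdifferential of `f`. -/
def graphSub (f : X → EReal) : Set (X × (X →L[ℝ] ℝ)) :=
  {q | IsSubgrad f q.1 q.2}

/-- Domain `D(∂f)` of the subdifferential. -/
def subdiffDom (f : X → EReal) : Set X := {x | ∃ p, IsSubgrad f x p}

/-- Range `R(∂f)` of the subdifferential. -/
def subdiffRan (f : X → EReal) : Set (X →L[ℝ] ℝ) := {p | ∃ x, IsSubgrad f x p}

/-- Monotone subset of `X × X*`. -/
def MonotoneSet (S : Set (X × (X →L[ℝ] ℝ))) : Prop :=
  ∀ a ∈ S, ∀ b ∈ S, 0 ≤ a.2 (a.1 - b.1) - b.2 (a.1 - b.1)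

/-- Maximal monotone subset of `X × X*` (maximal w.r.t. graph inclusion). -/
def MaxMonotoneSet (S : Set (X × (X →L[ℝ] ℝ))) : Prop :=
  MonotoneSet S ∧ ∀ T, MonotoneSet T → S ⊆ T → T = S

/-- Proper function: never `−∞` and not identically `+∞`. -/
def ProperE {Y : Type*} (f : Y → EReal) : Prop :=
  (∃ x, f x ≠ ⊤) ∧ ∀ x, f x ≠ ⊥

/-- Convexity of an extended-real-valued function via its epigraph. -/
def ConvexEpi (f : X → EReal) : Prop :=
  Convex ℝ {q : X × ℝ | f q.1 ≤ (q.2 : EReal)}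

/-- The lsc convex hull: the greatest lsc convex function majorized by `f`. -/
noncomputable def lscConvHull (f : X → EReal) : X → EReal := fun x =>
  sSup {v | ∃ g : X → EReal, ConvexEpi g ∧ LowerSemicontinuous g ∧ g ≤ f ∧ v = g x}

/-- Convex conjugate w.r.t. the dual system `(X, X*)`. -/
noncomputable def conjE (f : X → EReal) (p : X →L[ℝ] ℝ) : EReal :=
  ⨆ x, ((p x : EReal) - f x)

/-- Biconjugate `f**`. -/
noncomputable def biconjE (f : X → EReal) (x : X) : EReal :=
  ⨆ p : X →L[ℝ] ℝ, ((p x : EReal) - conjE f p)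

/-- Fitzpatrick function of `∂f`. -/
noncomputable def fitzSub (f : X → EReal) (x : X) (p : X →L[ℝ] ℝ) : EReal :=
  ⨆ a, ⨆ s, ⨆ _ : IsSubgrad f a s, ((s (x - a) + p a : ℝ) : EReal)

/-- Upper envelope `f^∪(x) = sup{⟨x−a, a*⟩ + f(a) : (a,a*) ∈ Graph ∂f}`. -/
noncomputable def upperEnv (f : X → EReal) (x : X) : EReal :=
  ⨆ a, ⨆ s, ⨆ _ : IsSubgrad f a s, ((s (x - a) : EReal) + f a)

end Defs

theorem fitzpatrick_le_biconj_add_conj {X : Type*} [AddCommGroup X] [Module ℝ X] [TopologicalSpace X]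
    [IsTopologicalAddGroup X] [ContinuousSMul ℝ X] [LocallyConvexSpace ℝ X] [T2Space X]
    (f : X → EReal) (x : X) (p : X →L[ℝ] ℝ) :
    fitzSub f x p ≤ biconjE f x + conjE f p := by
  refine iSup_le fun a => iSup_le fun s => iSup_le fun hs => ?_
  set r : ℝ := (f a).toReal with hrdef
  have hr : (r : EReal) = f a := EReal.coe_toReal hs.1 hs.2.1
  have claim1 : conjE f s ≤ ((s a - r : ℝ) : EReal) := by
    refine iSup_le fun y => ?_
    have hy : ((r + s (y - a) : ℝ) : EReal) ≤ f y := by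
      rw [EReal.coe_add, hr]; exact hs.2.2 y
    calc (s y : EReal) - f y ≤ (s y : EReal) - ((r + s (y - a) : ℝ) : EReal) :=
          EReal.sub_le_sub le_rfl hy
      _ = ((s a - r : ℝ) : EReal) := by
          rw [← EReal.coe_sub]
          congr 1
          simp [map_sub]
          ring
  have claim2 : ((p a - r : ℝ) : EReal) ≤ conjE f p := by
    have : ((p a - r : ℝ) : EReal) = (p a : EReal) - f a := by
      rw [← hr, ← EReal.coe_sub]
    rw [this]
    exact le_iSup (fun y => (p y : EReal) - f y) a
  have claim3 : ((s (x - a) + r : ℝ) : EReal) ≤ biconjE f x := by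
    have h1 : ((s (x - a) + r : ℝ) : EReal) ≤ (s x : EReal) - conjE f s := by
      calc ((s (x - a) + r : ℝ) : EReal) = (s x : EReal) - ((s a - r : ℝ) : EReal) := by
            rw [← EReal.coe_sub]; congr 1; simp [map_sub]; ring
        _ ≤ (s x : EReal) - conjE f s := EReal.sub_le_sub le_rfl claim1
    exact h1.trans (le_iSup (fun q : X →L[ℝ] ℝ => (q x : EReal) - conjE f q) s)
  calc ((s (x - a) + p a : ℝ) : EReal)
      = ((s (x - a) + r : ℝ) : EReal) + ((p a - r : ℝ) : EReal) := by
        rw [← EReal.coe_add]; congr 1; ring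
    _ ≤ biconjE f x + conjE f p := add_le_add claim3 claim2
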